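/- Let $(S_n)_{n\ge 1}$ be a standard Gaussian random walk started at $x \ge 0$. For every $\kappa > 0$ there exists a constant $c(\kappa) > 0$, independent of $x$, such that $\mathbb{E}_x\Big[\sum_{l \ge 0} e^{-\kappa S_l} \mathbf{1}\{\min_{j \le l} S_j \ge 0\}\Big] \le c(\kappa)$. -/

import Mathlib

open MeasureTheory ProbabilityTheory Real Finset

open scoped ENNReal NNReal

namespace GaussWalkAux

noncomputable def stdG : Measure ℝ := gaussianReal 0 1

instance : IsProbabilityMeasure stdG := by unfold stdG; infer_instance

/-- One-step operator of the walk killed below 0. -/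
noncomputable def Kop (ψ : ℝ → ℝ≥0∞) (s : ℝ) : ℝ≥0∞ :=
  ∫⁻ y, ({r : ℝ | 0 ≤ r}.indicator ψ) (s + y) ∂stdG

lemma measurableSet_nonneg : MeasurableSet {r : ℝ | 0 ≤ r} :=
  measurableSet_le measurable_const measurable_id

lemma Kop_meas {ψ : ℝ → ℝ≥0∞} (hψ : Measurable ψ) : Measurable (Kop ψ) := by
  apply Measurable.lintegral_prod_right'
    (f := fun p : ℝ × ℝ => ({r : ℝ | 0 ≤ r}.indicator ψ) (p.1 + p.2))
  exact (hψ.indicator measurableSet_nonneg).comp (measurable_fst.add measurable_snd)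

lemma gauss_exp_identity (κ y : ℝ) :
    gaussianPDFReal 0 1 y * rexp (-(κ * y))
      = rexp (κ ^ 2 / 2) * gaussianPDFReal 0 1 (y + κ) := by
  unfold gaussianPDFReal
  have h1 : rexp (-(y - 0) ^ 2 / (2 * ((1:ℝ≥0):ℝ))) * rexp (-(κ * y))
      = rexp (κ ^ 2 / 2) * rexp (-(y + κ - 0) ^ 2 / (2 * ((1:ℝ≥0):ℝ))) := by
    rw [← Real.exp_add, ← Real.exp_add]
    congr 1
    push_cast
    ring
  calc (√(2 * π * ((1:ℝ≥0):ℝ)))⁻¹ * rexp (-(y - 0) ^ 2 / (2 * ((1:ℝ≥0):ℝ))) * rexp (-(κ * y))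
      = (√(2 * π * ((1:ℝ≥0):ℝ)))⁻¹ * (rexp (-(y - 0) ^ 2 / (2 * ((1:ℝ≥0):ℝ))) * rexp (-(κ * y))) := by ring
    _ = (√(2 * π * ((1:ℝ≥0):ℝ)))⁻¹ * (rexp (κ ^ 2 / 2) * rexp (-(y + κ - 0) ^ 2 / (2 * ((1:ℝ≥0):ℝ)))) := by rw [h1]
    _ = _ := by ring

lemma lint_exp (κ : ℝ) :
    ∫⁻ y, ENNReal.ofReal (rexp (-(κ * y))) ∂stdG = ENNReal.ofReal (rexp (κ ^ 2 / 2)) := by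
  rw [stdG, gaussianReal_of_var_ne_zero _ one_ne_zero,
    lintegral_withDensity_eq_lintegral_mul _ (measurable_gaussianPDF _ _)
      (by exact (measurable_const.mul measurable_id).neg.exp.ennreal_ofReal)]
  have hpt : ∀ y : ℝ, (gaussianPDF 0 1 * fun y => ENNReal.ofReal (rexp (-(κ * y)))) y
      = ENNReal.ofReal (rexp (κ ^ 2 / 2)) * ENNReal.ofReal (gaussianPDFReal 0 1 (y + κ)) := by
    intro y
    simp only [Pi.mul_apply, gaussianPDF]
    rw [← ENNReal.ofReal_mul (gaussianPDFReal_nonneg _ _ _),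
      ← ENNReal.ofReal_mul (exp_nonneg _), gauss_exp_identity]
  simp only [hpt]
  rw [lintegral_const_mul (ENNReal.ofReal (rexp (κ ^ 2 / 2)))
      (f := fun a => ENNReal.ofReal (gaussianPDFReal 0 1 (a + κ)))
      (((measurable_gaussianPDFReal 0 1).comp (measurable_add_const κ)).ennreal_ofReal)]
  have htrans : ∫⁻ y, ENNReal.ofReal (gaussianPDFReal 0 1 (y + κ)) ∂volume
      = ∫⁻ y, ENNReal.ofReal (gaussianPDFReal 0 1 y) ∂volume :=
    (measurePreserving_add_right volume κ).lintegral_comp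
      (f := fun y => ENNReal.ofReal (gaussianPDFReal 0 1 y))
      (measurable_gaussianPDFReal 0 1).ennreal_ofReal
  rw [htrans, lintegral_gaussianPDFReal_eq_one 0 one_ne_zero, mul_one]

end GaussWalkAux

namespace GaussWalkAux

noncomputable def rho (κ x : ℝ) : ℝ :=
  ∫ y, ({y : ℝ | 0 ≤ x + y}.indicator fun y => rexp (-(κ * y))) y ∂stdG

noncomputable def phibar (x : ℝ) : ℝ := (stdG {y | x + y < 0}).toReal

lemma measurableSet_shift (x : ℝ) : MeasurableSet {y : ℝ | 0 ≤ x + y} :=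
  measurableSet_le measurable_const (measurable_const.add measurable_id)

lemma integrable_exp (κ : ℝ) : Integrable (fun y => rexp (-(κ * y))) stdG := by
  constructor
  · exact ((measurable_const.mul measurable_id).neg.exp).aestronglyMeasurable
  · rw [hasFiniteIntegral_iff_ofReal (ae_of_all _ fun y => (exp_nonneg _))]
    rw [lint_exp]
    exact ENNReal.ofReal_lt_top

lemma integrable_ind_exp (κ x : ℝ) :
    Integrable (fun y => ({y : ℝ | 0 ≤ x + y}.indicator fun y => rexp (-(κ * y))) y) stdG :=
  (integrable_exp κ).indicator (measurableSet_shift x)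

lemma rho_nonneg (κ x : ℝ) : 0 ≤ rho κ x :=
  integral_nonneg fun y => Set.indicator_nonneg (fun y _ => exp_nonneg _) y

lemma rho_mono (κ : ℝ) {x x' : ℝ} (h : x ≤ x') : rho κ x ≤ rho κ x' := by
  refine integral_mono (integrable_ind_exp κ x) (integrable_ind_exp κ x') fun y => ?_
  refine Set.indicator_le_indicator_of_subset (fun z hz => ?_) (fun z => exp_nonneg _) y
  simp only [Set.mem_setOf_eq] at *
  linarith

lemma ofReal_rho (κ x : ℝ) :
    ENNReal.ofReal (rho κ x)
      = ∫⁻ y, ({y : ℝ | 0 ≤ x + y}.indicator fun y => ENNReal.ofReal (rexp (-(κ * y)))) y ∂stdG := by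
  rw [rho, ofReal_integral_eq_lintegral_ofReal (integrable_ind_exp κ x)
    (ae_of_all _ fun y => Set.indicator_nonneg (fun y _ => exp_nonneg _) y)]
  congr 1
  ext y
  by_cases hy : y ∈ {y : ℝ | 0 ≤ x + y} <;>
    simp [Set.indicator_apply, hy]

lemma exists_rho_gt_one {κ : ℝ} (hκ : 0 < κ) : ∃ n : ℕ, 1 < rho κ n := by
  have hsup : (⨆ n : ℕ, ∫⁻ y, ({y : ℝ | 0 ≤ (n : ℝ) + y}.indicator
      fun y => ENNReal.ofReal (rexp (-(κ * y)))) y ∂stdG)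
      = ∫⁻ y, ENNReal.ofReal (rexp (-(κ * y))) ∂stdG := by
    rw [← lintegral_iSup]
    · congr 1
      ext y
      refine le_antisymm (iSup_le fun n => Set.indicator_le_self _ _ y) ?_
      refine le_trans (le_of_eq ?_) (le_iSup _ (⌈-y⌉₊))
      rw [Set.indicator_of_mem]
      have : -y ≤ (⌈-y⌉₊ : ℝ) := Nat.le_ceil _
      simp only [Set.mem_setOf_eq]
      linarith
    · intro n
      exact ((measurable_const.mul measurable_id).neg.exp.ennreal_ofReal).indicator
        (measurableSet_shift _)
    · intro n m hnm y
      refine Set.indicator_le_indicator_of_subset (fun z hz => ?_) (fun z => zero_le) y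
      simp only [Set.mem_setOf_eq] at *
      have hc : (n : ℝ) ≤ m := Nat.cast_le.mpr hnm
      linarith
  have h1 : (1 : ℝ≥0∞) < ⨆ n : ℕ, ∫⁻ y, ({y : ℝ | 0 ≤ (n : ℝ) + y}.indicator
      fun y => ENNReal.ofReal (rexp (-(κ * y)))) y ∂stdG := by
    rw [hsup, lint_exp, ← ENNReal.ofReal_one]
    rw [ENNReal.ofReal_lt_ofReal_iff (by positivity)]
    rw [show (1:ℝ) = rexp 0 by simp]
    exact exp_lt_exp.mpr (by positivity)
  rw [lt_iSup_iff] at h1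
  obtain ⟨n, hn⟩ := h1
  refine ⟨n, ?_⟩
  rw [← ofReal_rho] at hn
  exact ENNReal.one_lt_ofReal.mp hn

lemma phibar_nonneg (x : ℝ) : 0 ≤ phibar x := ENNReal.toReal_nonneg

lemma phibar_le_one (x : ℝ) : phibar x ≤ 1 := by
  rw [phibar]
  exact ENNReal.toReal_le_of_le_ofReal zero_le_one (by simpa using prob_le_one (μ := stdG))

lemma phibar_anti {x x' : ℝ} (h : x ≤ x') : phibar x' ≤ phibar x := by
  refine ENNReal.toReal_mono (measure_ne_top _ _) (measure_mono fun y hy => ?_)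
  simp only [Set.mem_setOf_eq] at *
  linarith

lemma phibar_pos (x : ℝ) : 0 < phibar x := by
  rw [phibar]
  refine ENNReal.toReal_pos ?_ (measure_ne_top _ _)
  intro h0
  have habs : volume ≪ stdG := gaussianReal_absolutelyContinuous' 0 one_ne_zero
  have : volume {y : ℝ | x + y < 0} = 0 := habs h0
  have hset : {y : ℝ | x + y < 0} = Set.Iio (-x) := by
    ext y; simp only [Set.mem_setOf_eq, Set.mem_Iio]; constructor <;> intro <;> linarith
  rw [hset, Real.volume_Iio] at this
  exact (ENNReal.top_ne_zero) this

lemma compl_prob (x : ℝ) : (stdG {y : ℝ | 0 ≤ x + y}).toReal = 1 - phibar x := by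
  have hset : {y : ℝ | 0 ≤ x + y} = {y : ℝ | x + y < 0}ᶜ := by
    ext y; simp only [Set.mem_setOf_eq, Set.mem_compl_iff, not_lt]
  have hms : MeasurableSet {y : ℝ | x + y < 0} :=
    measurableSet_lt (by fun_prop) measurable_const
  rw [hset, prob_compl_eq_one_sub hms,
    ENNReal.toReal_sub_of_le prob_le_one ENNReal.one_ne_top]
  simp [phibar]

end GaussWalkAux

namespace GaussWalkAux

lemma integral_b (κ A B x : ℝ) :
    ∫ y, ({y : ℝ | 0 ≤ x + y}.indicator fun y => A - B * rexp (-(κ * (x + y)))) y ∂stdG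
      = A * (1 - phibar x) - (B * rexp (-(κ * x))) * rho κ x := by
  have hfun : (fun y => ({y : ℝ | 0 ≤ x + y}.indicator fun y => A - B * rexp (-(κ * (x + y)))) y)
      = fun y => ({y : ℝ | 0 ≤ x + y}.indicator fun _ => A) y
        - (B * rexp (-(κ * x))) * ({y : ℝ | 0 ≤ x + y}.indicator fun y => rexp (-(κ * y))) y := by
    ext y
    by_cases hy : y ∈ {y : ℝ | 0 ≤ x + y}
    · simp only [Set.indicator_of_mem hy]
      rw [show -(κ * (x + y)) = -(κ * x) + -(κ * y) by ring, Real.exp_add]; ring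
    · simp [Set.indicator_of_notMem hy]
  rw [hfun, integral_sub ((integrable_const A).indicator (measurableSet_shift x))
      ((integrable_ind_exp κ x).const_mul _),
    integral_indicator_const A (measurableSet_shift x), integral_const_mul, measureReal_def, compl_prob,
    smul_eq_mul]
  unfold rho
  ring

lemma exists_constants {κ : ℝ} (hκ : 0 < κ) :
    ∃ A B : ℝ, 0 < B ∧ B ≤ A ∧ 1 ≤ A ∧ ∀ x : ℝ, 0 ≤ x →
      rexp (-(κ * x)) + (A * (1 - phibar x) - (B * rexp (-(κ * x))) * rho κ x)
        ≤ A - B * rexp (-(κ * x)) := by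
  obtain ⟨n, hn⟩ := exists_rho_gt_one hκ
  set p := phibar n with hp
  have hppos : 0 < p := phibar_pos n
  have hple : p ≤ 1 := phibar_le_one n
  set B := 1 / (rho κ n - 1) with hB
  have hBpos : 0 < B := by rw [hB]; exact div_pos one_pos (by linarith)
  set A := (1 + B) / p with hA
  have hApos : 0 < A := div_pos (by linarith) hppos
  have hApB : A * p = 1 + B := by rw [hA]; field_simp
  have hne : rho κ (n : ℝ) - 1 ≠ 0 := by linarith
  have hBrho : B * (rho κ n - 1) = 1 := by rw [hB]; field_simp
  have h4 : B * rho κ n = 1 + B := by linear_combination hBrho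
  have h1B : 1 + B ≤ A := by nlinarith
  have hA1 : 1 ≤ A := by nlinarith
  have hBA : B ≤ A := by nlinarith
  refine ⟨A, B, hBpos, hBA, hA1, fun x hx => ?_⟩
  set e := rexp (-(κ * x)) with he
  have he0 : 0 < e := exp_pos _
  have he1 : e ≤ 1 := exp_le_one_iff.mpr (by rw [neg_nonpos]; positivity)
  have hφ0 : 0 ≤ phibar x := phibar_nonneg x
  have hρ0 : 0 ≤ rho κ x := rho_nonneg κ x
  by_cases hcase : (n : ℝ) ≤ x
  · have h1 : rho κ n ≤ rho κ x := rho_mono κ hcase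
    have h6 : e * (B * rho κ n) = e * (1 + B) := by rw [h4]
    nlinarith [h6, mul_le_mul_of_nonneg_left h1 (mul_nonneg hBpos.le he0.le),
      mul_nonneg hApos.le hφ0]
  · push_neg at hcase
    have h2 : p ≤ phibar x := phibar_anti hcase.le
    by_cases h3 : 1 + B - B * rho κ x ≤ 0
    · nlinarith [mul_nonneg hApos.le hφ0, mul_nonpos_of_nonneg_of_nonpos he0.le h3,
        mul_nonneg (mul_nonneg hBpos.le he0.le) hρ0]
    · push_neg at h3
      nlinarith [mul_le_mul_of_nonneg_right he1 h3.le,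
        mul_le_mul_of_nonneg_left h2 hApos.le, hApB,
        mul_nonneg (mul_nonneg hBpos.le hρ0) (sub_nonneg.mpr he1),
        mul_nonneg (mul_nonneg hBpos.le he0.le) hρ0]

end GaussWalkAux

namespace GaussWalkAux

lemma ind_b_eq (κ A B x : ℝ) :
    (fun y => ({y : ℝ | 0 ≤ x + y}.indicator fun y => A - B * rexp (-(κ * (x + y)))) y)
      = fun y => ({y : ℝ | 0 ≤ x + y}.indicator fun _ => A) y
        - (B * rexp (-(κ * x))) * ({y : ℝ | 0 ≤ x + y}.indicator fun y => rexp (-(κ * y))) y := by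
  ext y
  by_cases hy : y ∈ {y : ℝ | 0 ≤ x + y}
  · simp only [Set.indicator_of_mem hy]
    rw [show -(κ * (x + y)) = -(κ * x) + -(κ * y) by ring, Real.exp_add]; ring
  · simp [Set.indicator_of_notMem hy]

lemma integrable_ind_b (κ A B x : ℝ) :
    Integrable (fun y => ({y : ℝ | 0 ≤ x + y}.indicator
      fun y => A - B * rexp (-(κ * (x + y)))) y) stdG := by
  rw [ind_b_eq]
  exact ((integrable_const A).indicator (measurableSet_shift x)).sub
    ((integrable_ind_exp κ x).const_mul _)

lemma ind_b_nonneg {κ A B : ℝ} (hκ : 0 < κ) (hB : 0 ≤ B) (hBA : B ≤ A) (x : ℝ) :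
    ∀ y : ℝ, 0 ≤ ({y : ℝ | 0 ≤ x + y}.indicator fun y => A - B * rexp (-(κ * (x + y)))) y := by
  intro y
  refine Set.indicator_nonneg (fun y hy => ?_) y
  simp only [Set.mem_setOf_eq] at hy
  have h1 : rexp (-(κ * (x + y))) ≤ 1 := exp_le_one_iff.mpr (by rw [neg_nonpos]; positivity)
  nlinarith [exp_pos (-(κ * (x + y)))]

lemma Kop_b_eq {κ A B : ℝ} (hκ : 0 < κ) (hB : 0 ≤ B) (hBA : B ≤ A) (x : ℝ) :
    Kop (fun s => ENNReal.ofReal (A - B * rexp (-(κ * s)))) x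
      = ENNReal.ofReal (A * (1 - phibar x) - (B * rexp (-(κ * x))) * rho κ x) := by
  have hpt : ∀ y : ℝ, ({r : ℝ | 0 ≤ r}.indicator (fun s => ENNReal.ofReal (A - B * rexp (-(κ * s))))) (x + y)
      = ENNReal.ofReal (({y : ℝ | 0 ≤ x + y}.indicator fun y => A - B * rexp (-(κ * (x + y)))) y) := by
    intro y
    by_cases hy : (0:ℝ) ≤ x + y
    · rw [Set.indicator_of_mem (by exact hy), Set.indicator_of_mem (by exact hy)]
    · rw [Set.indicator_of_notMem (by exact hy), Set.indicator_of_notMem (by exact hy)]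
      simp
  unfold Kop
  simp only [hpt]
  rw [← ofReal_integral_eq_lintegral_ofReal (integrable_ind_b κ A B x)
    (ae_of_all _ (ind_b_nonneg hκ hB hBA x)), integral_b]

lemma key_ennreal {κ A B : ℝ} (hκ : 0 < κ) (hB : 0 < B) (hBA : B ≤ A)
    (hkey : ∀ x : ℝ, 0 ≤ x →
      rexp (-(κ * x)) + (A * (1 - phibar x) - (B * rexp (-(κ * x))) * rho κ x)
        ≤ A - B * rexp (-(κ * x)))
    {x : ℝ} (hx : 0 ≤ x) :
    ENNReal.ofReal (rexp (-(κ * x))) + Kop (fun s => ENNReal.ofReal (A - B * rexp (-(κ * s)))) x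
      ≤ ENNReal.ofReal (A - B * rexp (-(κ * x))) := by
  rw [Kop_b_eq hκ hB.le hBA x]
  have hInonneg : 0 ≤ A * (1 - phibar x) - (B * rexp (-(κ * x))) * rho κ x := by
    rw [← integral_b]
    exact integral_nonneg (ind_b_nonneg hκ hB.le hBA x)
  rw [← ENNReal.ofReal_add (exp_nonneg _) hInonneg]
  exact ENNReal.ofReal_le_ofReal (hkey x hx)

lemma Kop_mono {ψ ψ' : ℝ → ℝ≥0∞} (h : ∀ s, 0 ≤ s → ψ s ≤ ψ' s) (x : ℝ) :
    Kop ψ x ≤ Kop ψ' x := by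
  refine lintegral_mono fun y => ?_
  by_cases hy : (0:ℝ) ≤ x + y
  · rw [Set.indicator_of_mem (by exact hy), Set.indicator_of_mem (by exact hy)]
    exact h _ hy
  · rw [Set.indicator_of_notMem (by exact hy), Set.indicator_of_notMem (by exact hy)]

lemma Kop_sum (n : ℕ) (ψ : ℕ → ℝ → ℝ≥0∞) (hψ : ∀ l, Measurable (ψ l)) (x : ℝ) :
    Kop (fun s => ∑ l ∈ Finset.range n, ψ l s) x = ∑ l ∈ Finset.range n, Kop (ψ l) x := by
  unfold Kop
  rw [← lintegral_finset_sum]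
  · congr 1
    ext y
    by_cases hy : (0:ℝ) ≤ x + y
    · rw [Set.indicator_of_mem (by exact hy)]
      exact Finset.sum_congr rfl fun l _ => (Set.indicator_of_mem (by exact hy) _).symm
    · rw [Set.indicator_of_notMem (by exact hy)]
      exact (Finset.sum_eq_zero fun l _ => Set.indicator_of_notMem (by exact hy) _).symm
  · intro l _
    exact ((hψ l).indicator measurableSet_nonneg).comp (measurable_id.const_add x)

lemma Kop_iter_meas {ψ : ℝ → ℝ≥0∞} (hψ : Measurable ψ) (l : ℕ) :
    Measurable (Kop^[l] ψ) := by
  induction l with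
  | zero => exact hψ
  | succ n ih => rw [Function.iterate_succ_apply']; exact Kop_meas ih

lemma partial_bound {κ A B : ℝ} (hκ : 0 < κ) (hB : 0 < B) (hBA : B ≤ A)
    (hkey : ∀ x : ℝ, 0 ≤ x →
      rexp (-(κ * x)) + (A * (1 - phibar x) - (B * rexp (-(κ * x))) * rho κ x)
        ≤ A - B * rexp (-(κ * x))) :
    ∀ n : ℕ, ∀ x : ℝ, 0 ≤ x →
      ∑ l ∈ Finset.range n, (Kop^[l] fun s => ENNReal.ofReal (rexp (-(κ * s)))) x
        ≤ ENNReal.ofReal (A - B * rexp (-(κ * x))) := by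
  intro n
  induction n with
  | zero => intro x hx; simp
  | succ n ih =>
    intro x hx
    rw [Finset.sum_range_succ']
    simp only [Function.iterate_succ_apply', Function.iterate_zero_apply]
    have hsum : ∑ l ∈ Finset.range n,
        Kop (Kop^[l] fun s => ENNReal.ofReal (rexp (-(κ * s)))) x
        = Kop (fun s => ∑ l ∈ Finset.range n,
            (Kop^[l] fun s => ENNReal.ofReal (rexp (-(κ * s)))) s) x :=
      (Kop_sum n _ (fun l => Kop_iter_meas (by fun_prop) l) x).symm
    rw [hsum]
    have hKle : Kop (fun s => ∑ l ∈ Finset.range n,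
        (Kop^[l] fun s => ENNReal.ofReal (rexp (-(κ * s)))) s) x
        ≤ Kop (fun s => ENNReal.ofReal (A - B * rexp (-(κ * s)))) x :=
      Kop_mono (fun s hs => ih s hs) x
    calc _ ≤ Kop (fun s => ENNReal.ofReal (A - B * rexp (-(κ * s)))) x
          + ENNReal.ofReal (rexp (-(κ * x))) := add_le_add hKle le_rfl
    _ ≤ _ := by rw [add_comm]; exact key_ennreal hκ hB hBA hkey hx

end GaussWalkAux

namespace GaussWalkAux

section Prob

variable {Ω : Type*} [MeasureSpace Ω] [IsProbabilityMeasure (ℙ : Measure Ω)]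
  (X : ℕ → Ω → ℝ)

lemma walk_set_measurable (hmeas : ∀ i, Measurable (X i)) (x : ℝ) (l : ℕ) :
    MeasurableSet {ω : Ω | ∀ j ≤ l, 0 ≤ x + ∑ i ∈ Finset.range j, X i ω} := by
  have hset : {ω : Ω | ∀ j ≤ l, 0 ≤ x + ∑ i ∈ Finset.range j, X i ω}
      = ⋂ j ∈ Set.Iic l, {ω : Ω | 0 ≤ x + ∑ i ∈ Finset.range j, X i ω} := by
    ext ω; simp [Set.mem_iInter]
  rw [hset]
  exact MeasurableSet.biInter (Set.to_countable _) fun j _ =>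
    measurableSet_le measurable_const
      (measurable_const.add (Finset.measurable_sum _ fun i _ => hmeas i))

lemma step (hmeas : ∀ i, Measurable (X i))
    (hindep : iIndepFun X ℙ)
    (hlaw : ∀ i, Measure.map (X i) ℙ = gaussianReal 0 1)
    (x : ℝ) (l : ℕ) {ψ : ℝ → ℝ≥0∞} (hψ : Measurable ψ) :
    ∫⁻ ω, ({ω' : Ω | ∀ j ≤ l + 1, 0 ≤ x + ∑ i ∈ Finset.range j, X i ω'}.indicator
        (fun ω' => ψ (x + ∑ i ∈ Finset.range (l + 1), X i ω'))) ω ∂ℙ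
      = ∫⁻ ω, ({ω' : Ω | ∀ j ≤ l, 0 ≤ x + ∑ i ∈ Finset.range j, X i ω'}.indicator
        (fun ω' => Kop ψ (x + ∑ i ∈ Finset.range l, X i ω'))) ω ∂ℙ := by
  classical
  set V : Ω → (ℕ → ℝ) := fun ω i => if h : i ∈ Finset.range l then X i ω else 0 with hV
  have hVmeas : Measurable V := by
    refine measurable_pi_lambda _ fun i => ?_
    by_cases h : i ∈ Finset.range l
    · simp only [hV, dif_pos h]; exact hmeas i
    · simp only [hV, dif_neg h]; exact measurable_const
  -- independence of V and X l
  have hdisj : Disjoint (Finset.range l) ({l} : Finset ℕ) := by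
    simp [Finset.disjoint_singleton_right]
  have hfin := hindep.indepFun_finset (Finset.range l) {l} hdisj hmeas
  have hVX : IndepFun V (X l) ℙ := by
    have h1 : Measurable (fun v : ↥(Finset.range l) → ℝ =>
        (fun i : ℕ => if h : i ∈ Finset.range l then v ⟨i, h⟩ else 0)) := by
      refine measurable_pi_lambda _ fun i => ?_
      by_cases h : i ∈ Finset.range l
      · simp only [dif_pos h]; exact measurable_pi_apply _
      · simp only [dif_neg h]; exact measurable_const
    have h2 : Measurable (fun v : ↥({l} : Finset ℕ) → ℝ =>
        v ⟨l, Finset.mem_singleton_self l⟩) := measurable_pi_apply _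
    exact hfin.comp h1 h2
  haveI : IsProbabilityMeasure (Measure.map V ℙ) := Measure.isProbabilityMeasure_map hVmeas.aemeasurable
  have hmap : Measure.map (fun ω => (V ω, X l ω)) ℙ = (Measure.map V ℙ).prod stdG := by
    have := (indepFun_iff_map_prod_eq_prod_map_map hVmeas.aemeasurable
      (hmeas l).aemeasurable).mp hVX
    rw [this, hlaw l]; rfl
  -- the function on the product space
  set D : Set ((ℕ → ℝ) × ℝ) := {p | ∀ j ≤ l, 0 ≤ x + ∑ i ∈ Finset.range j, p.1 i} with hD
  set G : ((ℕ → ℝ) × ℝ) → ℝ≥0∞ :=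
    fun p => ({r : ℝ | 0 ≤ r}.indicator ψ) ((x + ∑ i ∈ Finset.range l, p.1 i) + p.2) with hG
  have hDmeas : MeasurableSet D := by
    have hset : D = ⋂ j ∈ Set.Iic l, {p : (ℕ → ℝ) × ℝ | 0 ≤ x + ∑ i ∈ Finset.range j, p.1 i} := by
      ext p; simp [hD, Set.mem_iInter]
    rw [hset]
    exact MeasurableSet.biInter (Set.to_countable _) fun j _ =>
      measurableSet_le measurable_const
        (measurable_const.add
          (Finset.measurable_sum _ fun i _ => (measurable_pi_apply i).comp measurable_fst))
  have hGmeas : Measurable G :=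
    (hψ.indicator measurableSet_nonneg).comp
      ((measurable_const.add
        (Finset.measurable_sum _ fun i _ => (measurable_pi_apply i).comp measurable_fst)).add
        measurable_snd)
  have hsumV : ∀ (ω : Ω) (j : ℕ), j ≤ l →
      ∑ i ∈ Finset.range j, V ω i = ∑ i ∈ Finset.range j, X i ω := by
    intro ω j hj
    refine Finset.sum_congr rfl fun i hi => ?_
    have hil : i ∈ Finset.range l :=
      Finset.mem_range.mpr (lt_of_lt_of_le (Finset.mem_range.mp hi) hj)
    simp only [hV, dif_pos hil]
  have hmemD : ∀ ω : Ω, ((V ω, X l ω) ∈ D ↔ ∀ j ≤ l, 0 ≤ x + ∑ i ∈ Finset.range j, X i ω) := by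
    intro ω
    simp only [hD, Set.mem_setOf_eq]
    constructor
    · intro h j hj; rw [← hsumV ω j hj]; exact h j hj
    · intro h j hj; rw [hsumV ω j hj]; exact h j hj
  have hLHS : ∀ ω : Ω,
      ({ω' : Ω | ∀ j ≤ l + 1, 0 ≤ x + ∑ i ∈ Finset.range j, X i ω'}.indicator
        (fun ω' => ψ (x + ∑ i ∈ Finset.range (l + 1), X i ω'))) ω
      = (D.indicator G) (V ω, X l ω) := by
    intro ω
    by_cases hc : ∀ j ≤ l, 0 ≤ x + ∑ i ∈ Finset.range j, X i ω
    · have hmD : (V ω, X l ω) ∈ D := (hmemD ω).mpr hc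
      rw [Set.indicator_of_mem hmD]
      have hSl : (x + ∑ i ∈ Finset.range l, V ω i) + X l ω
          = x + ∑ i ∈ Finset.range (l + 1), X i ω := by
        rw [hsumV ω l le_rfl, Finset.sum_range_succ]; ring
      by_cases hc2 : 0 ≤ x + ∑ i ∈ Finset.range (l + 1), X i ω
      · have hmA : ω ∈ {ω' : Ω | ∀ j ≤ l + 1, 0 ≤ x + ∑ i ∈ Finset.range j, X i ω'} := by
          intro j hj
          rcases eq_or_lt_of_le hj with h | h
          · subst h; exact hc2
          · exact hc j (Nat.lt_succ_iff.mp h)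
        rw [Set.indicator_of_mem hmA]
        simp only [hG]
        rw [hSl, Set.indicator_of_mem (by exact hc2)]
      · have hnA : ω ∉ {ω' : Ω | ∀ j ≤ l + 1, 0 ≤ x + ∑ i ∈ Finset.range j, X i ω'} :=
          fun h => hc2 (h (l + 1) le_rfl)
        rw [Set.indicator_of_notMem hnA]
        simp only [hG]
        rw [hSl, Set.indicator_of_notMem (by exact hc2)]
    · have hnD : (V ω, X l ω) ∉ D := fun h => hc ((hmemD ω).mp h)
      have hnA : ω ∉ {ω' : Ω | ∀ j ≤ l + 1, 0 ≤ x + ∑ i ∈ Finset.range j, X i ω'} := by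
        intro h
        push_neg at hc
        obtain ⟨j, hj, hcj⟩ := hc
        exact absurd (h j (le_trans hj (Nat.le_succ l))) (not_le.mpr hcj)
      rw [Set.indicator_of_notMem hnA, Set.indicator_of_notMem hnD]
  have hinner : ∀ v : ℕ → ℝ,
      ∫⁻ t, (D.indicator G) (v, t) ∂stdG
        = ({v' : ℕ → ℝ | ∀ j ≤ l, 0 ≤ x + ∑ i ∈ Finset.range j, v' i}.indicator
            (fun v' => Kop ψ (x + ∑ i ∈ Finset.range l, v' i))) v := by
    intro v
    by_cases hv : ∀ j ≤ l, 0 ≤ x + ∑ i ∈ Finset.range j, v i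
    · have hmemv : ∀ t : ℝ, (v, t) ∈ D := fun t => hv
      have : ∀ t : ℝ, (D.indicator G) (v, t) = G (v, t) :=
        fun t => Set.indicator_of_mem (hmemv t) G
      simp only [this]
      rw [Set.indicator_of_mem (by exact hv)]
      rfl
    · have hnv : ∀ t : ℝ, (v, t) ∉ D := fun t h => hv h
      have : ∀ t : ℝ, (D.indicator G) (v, t) = 0 :=
        fun t => Set.indicator_of_notMem (hnv t) G
      simp only [this]
      rw [Set.indicator_of_notMem (by exact hv), lintegral_zero]
  have hKmeas : Measurable (fun v : ℕ → ℝ =>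
      ({v' : ℕ → ℝ | ∀ j ≤ l, 0 ≤ x + ∑ i ∈ Finset.range j, v' i}.indicator
        (fun v' => Kop ψ (x + ∑ i ∈ Finset.range l, v' i))) v) := by
    refine Measurable.indicator ?_ ?_
    · exact (Kop_meas hψ).comp
        (measurable_const.add (Finset.measurable_sum _ fun i _ => measurable_pi_apply i))
    · have hset : {v' : ℕ → ℝ | ∀ j ≤ l, 0 ≤ x + ∑ i ∈ Finset.range j, v' i}
          = ⋂ j ∈ Set.Iic l, {v' : ℕ → ℝ | 0 ≤ x + ∑ i ∈ Finset.range j, v' i} := by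
        ext v'; simp [Set.mem_iInter]
      rw [hset]
      exact MeasurableSet.biInter (Set.to_countable _) fun j _ =>
        measurableSet_le measurable_const
          (measurable_const.add (Finset.measurable_sum _ fun i _ => measurable_pi_apply i))
  have hRHS : ∀ ω : Ω,
      ({v' : ℕ → ℝ | ∀ j ≤ l, 0 ≤ x + ∑ i ∈ Finset.range j, v' i}.indicator
        (fun v' => Kop ψ (x + ∑ i ∈ Finset.range l, v' i))) (V ω)
      = ({ω' : Ω | ∀ j ≤ l, 0 ≤ x + ∑ i ∈ Finset.range j, X i ω'}.indicator
        (fun ω' => Kop ψ (x + ∑ i ∈ Finset.range l, X i ω'))) ω := by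
    intro ω
    by_cases hc : ∀ j ≤ l, 0 ≤ x + ∑ i ∈ Finset.range j, X i ω
    · have hmv : V ω ∈ {v' : ℕ → ℝ | ∀ j ≤ l, 0 ≤ x + ∑ i ∈ Finset.range j, v' i} := by
        intro j hj; rw [hsumV ω j hj]; exact hc j hj
      rw [Set.indicator_of_mem hmv, Set.indicator_of_mem (by exact hc),
        hsumV ω l le_rfl]
    · have hnv : V ω ∉ {v' : ℕ → ℝ | ∀ j ≤ l, 0 ≤ x + ∑ i ∈ Finset.range j, v' i} := by
        intro h
        exact hc fun j hj => by rw [← hsumV ω j hj]; exact h j hj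
      rw [Set.indicator_of_notMem hnv, Set.indicator_of_notMem (by exact hc)]
  calc ∫⁻ ω, ({ω' : Ω | ∀ j ≤ l + 1, 0 ≤ x + ∑ i ∈ Finset.range j, X i ω'}.indicator
        (fun ω' => ψ (x + ∑ i ∈ Finset.range (l + 1), X i ω'))) ω ∂ℙ
      = ∫⁻ ω, (D.indicator G) (V ω, X l ω) ∂ℙ := lintegral_congr hLHS
    _ = ∫⁻ p, (D.indicator G) p ∂(Measure.map (fun ω => (V ω, X l ω)) ℙ) :=
        (lintegral_map (hGmeas.indicator hDmeas) (hVmeas.prodMk (hmeas l))).symm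
    _ = ∫⁻ p, (D.indicator G) p ∂((Measure.map V ℙ).prod stdG) := by rw [hmap]
    _ = ∫⁻ v, ∫⁻ t, (D.indicator G) (v, t) ∂stdG ∂(Measure.map V ℙ) :=
        lintegral_prod _ (hGmeas.indicator hDmeas).aemeasurable
    _ = ∫⁻ v, ({v' : ℕ → ℝ | ∀ j ≤ l, 0 ≤ x + ∑ i ∈ Finset.range j, v' i}.indicator
          (fun v' => Kop ψ (x + ∑ i ∈ Finset.range l, v' i))) v ∂(Measure.map V ℙ) :=
        lintegral_congr hinner
    _ = ∫⁻ ω, ({v' : ℕ → ℝ | ∀ j ≤ l, 0 ≤ x + ∑ i ∈ Finset.range j, v' i}.indicator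
          (fun v' => Kop ψ (x + ∑ i ∈ Finset.range l, v' i))) (V ω) ∂ℙ :=
        lintegral_map hKmeas hVmeas
    _ = _ := lintegral_congr hRHS

lemma walk_eq (hmeas : ∀ i, Measurable (X i))
    (hindep : iIndepFun X ℙ)
    (hlaw : ∀ i, Measure.map (X i) ℙ = gaussianReal 0 1)
    {x : ℝ} (hx : 0 ≤ x) :
    ∀ (l : ℕ) {ψ : ℝ → ℝ≥0∞}, Measurable ψ →
    ∫⁻ ω, ({ω' : Ω | ∀ j ≤ l, 0 ≤ x + ∑ i ∈ Finset.range j, X i ω'}.indicator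
        (fun ω' => ψ (x + ∑ i ∈ Finset.range l, X i ω'))) ω ∂ℙ = (Kop^[l] ψ) x := by
  intro l
  induction l with
  | zero =>
    intro ψ hψ
    have hset : {ω' : Ω | ∀ j ≤ 0, 0 ≤ x + ∑ i ∈ Finset.range j, X i ω'} = Set.univ := by
      ext ω
      simp only [Set.mem_setOf_eq, Set.mem_univ, iff_true]
      intro j hj
      rcases Nat.le_zero.mp hj
      simpa using hx
    rw [hset]
    simp only [Set.indicator_univ, Finset.range_zero, Finset.sum_empty, add_zero,
      Function.iterate_zero_apply]
    simp [lintegral_const]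
  | succ n ih =>
    intro ψ hψ
    rw [step X hmeas hindep hlaw x n hψ, ih (Kop_meas hψ), ← Function.iterate_succ_apply]

end Prob

end GaussWalkAux


open GaussWalkAux in
/-- For a standard Gaussian random walk started at `x ≥ 0`, for every `κ > 0` there is a
constant `c(κ)` independent of `x` bounding `E_x[∑_{l ≥ 0} e^{-κ S_l} 1{min_{j≤l} S_j ≥ 0}]`. -/
theorem gaussian_walk_exp_sum_bound
    {Ω : Type*} [MeasureSpace Ω] [IsProbabilityMeasure (ℙ : Measure Ω)]
    (X : ℕ → Ω → ℝ)
    (hmeas : ∀ i, Measurable (X i))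
    (hindep : iIndepFun X ℙ)
    (hlaw : ∀ i, Measure.map (X i) ℙ = gaussianReal 0 1)
    (κ : ℝ) (hκ : 0 < κ) :
    ∃ c : ℝ, 0 < c ∧ ∀ x : ℝ, 0 ≤ x →
      (∫⁻ ω, ∑' l : ℕ,
          ENNReal.ofReal
            ({ω' | ∀ j ≤ l, 0 ≤ x + ∑ i ∈ Finset.range j, X i ω'}.indicator
              (fun ω' => Real.exp (-(κ * (x + ∑ i ∈ Finset.range l, X i ω')))) ω) ∂ℙ)
        ≤ ENNReal.ofReal c := by
  obtain ⟨A, B, hB, hBA, hA1, hkey⟩ := GaussWalkAux.exists_constants hκ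
  refine ⟨A, by linarith, fun x hx => ?_⟩
  have hofr : ∀ (l : ℕ) (ω : Ω),
      ENNReal.ofReal (({ω' : Ω | ∀ j ≤ l, 0 ≤ x + ∑ i ∈ Finset.range j, X i ω'}.indicator
        (fun ω' => Real.exp (-(κ * (x + ∑ i ∈ Finset.range l, X i ω'))))) ω)
      = ({ω' : Ω | ∀ j ≤ l, 0 ≤ x + ∑ i ∈ Finset.range j, X i ω'}.indicator
        (fun ω' => ENNReal.ofReal (Real.exp (-(κ * (x + ∑ i ∈ Finset.range l, X i ω')))))) ω := by
    intro l ω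
    by_cases h : ω ∈ {ω' : Ω | ∀ j ≤ l, 0 ≤ x + ∑ i ∈ Finset.range j, X i ω'}
    · rw [Set.indicator_of_mem h, Set.indicator_of_mem h]
    · rw [Set.indicator_of_notMem h, Set.indicator_of_notMem h, ENNReal.ofReal_zero]
  have hmeas' : ∀ l : ℕ, AEMeasurable (fun ω : Ω =>
      ({ω' : Ω | ∀ j ≤ l, 0 ≤ x + ∑ i ∈ Finset.range j, X i ω'}.indicator
        (fun ω' => ENNReal.ofReal (Real.exp (-(κ * (x + ∑ i ∈ Finset.range l, X i ω')))))) ω)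
      (ℙ : Measure Ω) := by
    intro l
    refine (Measurable.indicator ?_ (walk_set_measurable X hmeas x l)).aemeasurable
    exact (((measurable_const.add
      (Finset.measurable_sum _ fun i _ => hmeas i)).const_mul κ).neg.exp).ennreal_ofReal
  calc ∫⁻ ω, ∑' l : ℕ, ENNReal.ofReal
          (({ω' : Ω | ∀ j ≤ l, 0 ≤ x + ∑ i ∈ Finset.range j, X i ω'}.indicator
            (fun ω' => Real.exp (-(κ * (x + ∑ i ∈ Finset.range l, X i ω'))))) ω) ∂ℙ
      = ∫⁻ ω, ∑' l : ℕ,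
          ({ω' : Ω | ∀ j ≤ l, 0 ≤ x + ∑ i ∈ Finset.range j, X i ω'}.indicator
            (fun ω' => ENNReal.ofReal (Real.exp (-(κ * (x + ∑ i ∈ Finset.range l, X i ω')))))) ω ∂ℙ :=
        lintegral_congr fun ω => tsum_congr fun l => hofr l ω
    _ = ∑' l : ℕ, ∫⁻ ω,
          ({ω' : Ω | ∀ j ≤ l, 0 ≤ x + ∑ i ∈ Finset.range j, X i ω'}.indicator
            (fun ω' => ENNReal.ofReal (Real.exp (-(κ * (x + ∑ i ∈ Finset.range l, X i ω')))))) ω ∂ℙ :=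
        lintegral_tsum hmeas'
    _ = ∑' l : ℕ, (Kop^[l] fun s => ENNReal.ofReal (rexp (-(κ * s)))) x :=
        tsum_congr fun l => walk_eq X hmeas hindep hlaw hx l
          (((measurable_id.const_mul κ).neg.exp).ennreal_ofReal)
    _ = ⨆ n : ℕ, ∑ l ∈ Finset.range n,
          (Kop^[l] fun s => ENNReal.ofReal (rexp (-(κ * s)))) x := ENNReal.tsum_eq_iSup_nat
    _ ≤ ENNReal.ofReal A := by
        refine iSup_le fun n => le_trans (partial_bound hκ hB hBA hkey n x hx) ?_
        refine ENNReal.ofReal_le_ofReal ?_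
        nlinarith [exp_pos (-(κ * x)), hB]
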